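/- arXiv:2004.00695 — 3 statements merged into one kernel-verified Lean document; each statement's English description precedes it below -/
import Mathlib

section
/- Let q ≥ 1, m₁ ≥ 1, m₂ ≥ 1 be integers. Let M₁ be an (m₁q)×(m₁q) complex matrix satisfying the Bell symmetry condition (symm) with parameters (m₁, q), and let M₂ be an (m₂q)×(m₂q) complex matrix all of whose entries are real. Then the Kronecker product M = M₁ ⊗ M₂, of order m₁m₂q², satisfies the Bell symmetry condition (symm) with parameters (m₁m₂q, q): for all 0 ≤ s,t ≤ q−1 and 0 ≤ x,y ≤ m₁m₂q−1, M_{m₁m₂q·[q−s]_q + x, m₁m₂q·[q−t]_q + y} = conj(M_{m₁m₂q·s + x, m₁m₂q·t + y}). -/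
open scoped BigOperators

/-- The index `m*s + x` as an element of `Fin (m*q)`. -/
def idx (m q : ℕ) (x : Fin m) (s : Fin q) : Fin (m * q) :=
  ⟨m * s.val + x.val, by
    have h1 : m * s.val + x.val < m * (s.val + 1) := by
      rw [Nat.mul_succ]; exact Nat.add_lt_add_left x.isLt _
    exact lt_of_lt_of_le h1 (Nat.mul_le_mul_left m s.isLt)⟩

/-- `[q - s]_q`, the residue of `q - s` modulo `q`, as an element of `Fin q`. -/
def negMod {q : ℕ} (s : Fin q) : Fin q :=
  ⟨(q - s.val) % q, Nat.mod_lt _ s.pos⟩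

/-- The Bell symmetry condition (symm):
`M_{m[q-s]_q+x, m[q-t]_q+y} = conj (M_{ms+x, mt+y})` for all `s,t,x,y`. -/
def BellSymm (m q : ℕ) (M : Matrix (Fin (m * q)) (Fin (m * q)) ℂ) : Prop :=
  ∀ (s t : Fin q) (x y : Fin m),
    M (idx m q x (negMod s)) (idx m q y (negMod t)) =
      starRingEnd ℂ (M (idx m q x s) (idx m q y t))

/-- The first (most significant) component of an index of `Fin (n₁ * n₂)`,
writing `i = i₁ * n₂ + i₂`. -/
def kHi {n₁ n₂ : ℕ} (i : Fin (n₁ * n₂)) : Fin n₁ :=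
  ⟨i.val / n₂, Nat.div_lt_of_lt_mul (Nat.mul_comm n₁ n₂ ▸ i.isLt)⟩

/-- The second (least significant) component of an index of `Fin (n₁ * n₂)`,
writing `i = i₁ * n₂ + i₂`. -/
def kLo {n₁ n₂ : ℕ} (i : Fin (n₁ * n₂)) : Fin n₂ :=
  ⟨i.val % n₂, by
    have h := i.pos
    rcases Nat.eq_zero_or_pos n₂ with h2 | h2
    · simp [h2] at h
    · exact Nat.mod_lt _ h2⟩

/-- The Kronecker product of `M₁` and `M₂`, indexed by `Fin (n₁ * n₂)`:
`(M₁ ⊗ M₂)_{(i₁ n₂ + i₂),(j₁ n₂ + j₂)} = (M₁)_{i₁ j₁} (M₂)_{i₂ j₂}`. -/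
noncomputable def kron {n₁ n₂ : ℕ} (M₁ : Matrix (Fin n₁) (Fin n₁) ℂ)
    (M₂ : Matrix (Fin n₂) (Fin n₂) ℂ) : Matrix (Fin (n₁ * n₂)) (Fin (n₁ * n₂)) ℂ :=
  fun i j => M₁ (kHi i) (kHi j) * M₂ (kLo i) (kLo j)

/-- If `M₁` satisfies the Bell symmetry condition with parameters `(m₁, q)` and
`M₂` is real, then the Kronecker product `M₁ ⊗ M₂` satisfies the Bell symmetry
condition with parameters `(m₁ m₂ q, q)`. -/
theorem kron_bellSymm (q m₁ m₂ : ℕ) (hq : 1 ≤ q) (hm₁ : 1 ≤ m₁) (hm₂ : 1 ≤ m₂)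
    (M₁ : Matrix (Fin (m₁ * q)) (Fin (m₁ * q)) ℂ)
    (M₂ : Matrix (Fin (m₂ * q)) (Fin (m₂ * q)) ℂ)
    (h₁ : BellSymm m₁ q M₁)
    (h₂ : ∀ i j, (M₂ i j).im = 0) :
    BellSymm (m₁ * m₂ * q) q
      (Matrix.reindex (finCongr (by ring)) (finCongr (by ring)) (kron M₁ M₂)) := by
  intro s t x y
  have hn₂ : 0 < m₂ * q := Nat.mul_pos hm₂ hq
  have hxlt : ∀ z : Fin (m₁ * m₂ * q), z.val / (m₂ * q) < m₁ := fun z =>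
    Nat.div_lt_of_lt_mul (lt_of_lt_of_eq z.isLt (by ring))
  have hhi : ∀ (z : Fin (m₁ * m₂ * q)) (u : Fin q)
      (h : m₁ * m₂ * q * q = m₁ * q * (m₂ * q)),
      kHi ((finCongr h) (idx (m₁ * m₂ * q) q z u)) =
        idx m₁ q ⟨z.val / (m₂ * q), hxlt z⟩ u := by
    intro z u h
    apply Fin.ext
    show (m₁ * m₂ * q * u.val + z.val) / (m₂ * q) = m₁ * u.val + z.val / (m₂ * q)
    rw [show m₁ * m₂ * q * u.val + z.val = z.val + (m₁ * u.val) * (m₂ * q) by ring,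
      Nat.add_mul_div_right _ _ hn₂, Nat.add_comm]
  have hlo : ∀ (z : Fin (m₁ * m₂ * q)) (u : Fin q)
      (h : m₁ * m₂ * q * q = m₁ * q * (m₂ * q)),
      kLo ((finCongr h) (idx (m₁ * m₂ * q) q z u)) =
        (⟨z.val % (m₂ * q), Nat.mod_lt _ hn₂⟩ : Fin (m₂ * q)) := by
    intro z u h
    apply Fin.ext
    show (m₁ * m₂ * q * u.val + z.val) % (m₂ * q) = z.val % (m₂ * q)
    rw [show m₁ * m₂ * q * u.val + z.val = z.val + (m₁ * u.val) * (m₂ * q) by ring,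
      Nat.add_mul_mod_self_right]
  simp only [Matrix.reindex_apply, Matrix.submatrix_apply, Equiv.symm_symm,
    finCongr_symm, kron, hhi, hlo]
  rw [h₁ s t ⟨x.val / (m₂ * q), hxlt x⟩ ⟨y.val / (m₂ * q), hxlt y⟩, map_mul]
  congr 1
  exact (Complex.conj_eq_iff_im.mpr (h₂ _ _)).symm
end

section
/- Let H be a Hadamard matrix of order n ≥ 1. Then ν(H) = n, hence the excess satisfies Best's bound Σ(H) ≤ n√n; moreover equality Σ(H) = n√n holds if and only if every row sum of H equals √n (i.e. H has constant row sum √n). -/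
open scoped BigOperators
open Matrix

/-- For a Hadamard matrix of order `n ≥ 1`: `ν(H) = n`, Best's bound
`Σ(H) ≤ n√n` holds, and equality holds iff every row sum of `H` equals `√n`. -/
theorem hadamard_best_bound (n : ℕ) (hn : 1 ≤ n)
    (H : Matrix (Fin n) (Fin n) ℝ)
    (hent : ∀ i j, H i j = 1 ∨ H i j = -1)
    (horth : Hᵀ * H = (n : ℝ) • 1) :
    Real.sqrt (∑ i, (∑ j, H i j) ^ 2) = n ∧
    (∑ i, ∑ j, H i j) ≤ n * Real.sqrt n ∧
    ((∑ i, ∑ j, H i j) = n * Real.sqrt n ↔ ∀ i, ∑ j, H i j = Real.sqrt n) := by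
  have hn0 : (0:ℝ) < n := by exact_mod_cast hn
  have hsq : Real.sqrt n ^ 2 = (n:ℝ) := Real.sq_sqrt hn0.le
  have hspos : 0 < Real.sqrt n := Real.sqrt_pos.mpr hn0
  have h1 : ∀ j k, ∑ i, H i j * H i k = if j = k then (n:ℝ) else 0 := by
    intro j k
    have := congrFun (congrFun horth j) k
    simpa [Matrix.mul_apply, Matrix.transpose_apply, Matrix.smul_apply,
      Matrix.one_apply] using this
  have key : ∑ i, (∑ j, H i j) ^ 2 = (n:ℝ)^2 := by
    calc ∑ i, (∑ j, H i j) ^ 2 = ∑ i, ∑ j, ∑ k, H i j * H i k := by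
          refine Finset.sum_congr rfl fun i _ => ?_
          rw [sq, Finset.sum_mul_sum]
      _ = ∑ j, ∑ k, ∑ i, H i j * H i k := by
          rw [Finset.sum_comm]
          exact Finset.sum_congr rfl fun j _ => Finset.sum_comm
      _ = (n:ℝ)^2 := by simp [h1, sq]
  have expand : ∑ i, (∑ j, H i j - Real.sqrt n) ^ 2
      = 2*(n:ℝ)^2 - 2*Real.sqrt n * ∑ i, ∑ j, H i j := by
    have : ∑ i, (∑ j, H i j - Real.sqrt n) ^ 2
        = (∑ i, (∑ j, H i j)^2) - 2*Real.sqrt n * (∑ i, ∑ j, H i j)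
          + (n:ℝ) * Real.sqrt n ^ 2 := by
      rw [Finset.sum_congr rfl (fun i _ => sub_sq (∑ j, H i j) (Real.sqrt n)),
        Finset.sum_add_distrib, Finset.sum_sub_distrib]
      simp [Finset.mul_sum, Finset.sum_mul, mul_comm, mul_assoc, mul_left_comm]
    rw [this, key, hsq]; ring
  have hnn : 0 ≤ ∑ i, (∑ j, H i j - Real.sqrt n) ^ 2 :=
    Finset.sum_nonneg fun i _ => sq_nonneg _
  have hbound : (∑ i, ∑ j, H i j) ≤ n * Real.sqrt n := by
    rw [expand] at hnn
    nlinarith [hsq, hspos]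
  refine ⟨?_, hbound, ?_⟩
  · rw [key, Real.sqrt_sq hn0.le]
  · constructor
    · intro hEq
      have hzero : ∑ i, (∑ j, H i j - Real.sqrt n) ^ 2 = 0 := by
        rw [expand, hEq]; nlinarith [hsq]
      intro i
      have := (Finset.sum_eq_zero_iff_of_nonneg
        (fun i _ => sq_nonneg (∑ j, H i j - Real.sqrt n))).mp hzero i (Finset.mem_univ i)
      have := pow_eq_zero_iff (n := 2) (by norm_num) |>.mp this
      linarith [this]
    · intro hall
      rw [Finset.sum_congr rfl fun i _ => hall i]
      simp [mul_comm]
end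

section
/- Let q ≥ 2 be an integer, ω = exp(2πi/q), and let F be the q²×q² complex matrix with entries F_{qs+x, qt+y} = ω^{xt−sy} for 0 ≤ s,t,x,y ≤ q−1. Then the LHV value of the associated Bell inequality (with m = q settings and q outcomes) equals q³: the value q³ is attained by some local deterministic strategy (namely a_x = ω^x, b_y = ω^{−y}), and for every local deterministic strategy (a,b) the real part of the Bell value V(F,a,b) is at most q³. -/
open scoped BigOperators

/-- The Bell value `V(M,a,b) = ∑_{x,y,s,t} M_{ms+x,mt+y} a_x^s b_y^t`. -/
noncomputable def bellValue (m q : ℕ) (M : Matrix (Fin (m * q)) (Fin (m * q)) ℂ)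
    (a b : Fin m → ℂ) : ℂ :=
  ∑ x : Fin m, ∑ y : Fin m, ∑ s : Fin q, ∑ t : Fin q,
    M (idx m q x s) (idx m q y t) * a x ^ s.val * b y ^ t.val

lemma geom_aux (q : ℕ) (z : ℂ) (hz : z ^ q = 1) :
    ∑ s : Fin q, z ^ (s : ℕ) = if z = 1 then (q : ℂ) else 0 := by
  rw [Fin.sum_univ_eq_sum_range (fun i => z ^ i)]
  split_ifs with h
  · subst h; simp
  · rw [geom_sum_eq h, hz]; simp


/-- The LHV value of the Bell inequality associated to the matrix
`F_{qs+x, qt+y} = ω^{xt - sy}` (with `m = q` settings and `q` outcomes) equals `q³`: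
the value `q³` is attained by the strategy `a_x = ωˣ`, `b_y = ω⁻ʸ`, and for every
local deterministic strategy the real part of the Bell value is at most `q³`. -/
theorem fourier_lhv_value (q : ℕ) (hq : 2 ≤ q)
    (F : Matrix (Fin (q * q)) (Fin (q * q)) ℂ)
    (hF : ∀ (s t x y : Fin q),
      F (idx q q x s) (idx q q y t) =
        Complex.exp (2 * Real.pi * Complex.I / q) ^
          ((x.val : ℤ) * t.val - (s.val : ℤ) * y.val)) :
    bellValue q q F
        (fun x => Complex.exp (2 * Real.pi * Complex.I / q) ^ (x.val : ℤ))
        (fun y => Complex.exp (2 * Real.pi * Complex.I / q) ^ (-(y.val : ℤ))) = (q : ℂ) ^ 3 ∧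
    ∀ a b : Fin q → ℂ, (∀ x, a x ^ q = 1) → (∀ y, b y ^ q = 1) →
      (bellValue q q F a b).re ≤ (q : ℝ) ^ 3 := by
  have hq0 : q ≠ 0 := by omega
  have : NeZero q := ⟨hq0⟩
  set ω : ℂ := Complex.exp (2 * Real.pi * Complex.I / q) with hωdef
  have hω0 : ω ≠ 0 := Complex.exp_ne_zero _
  have hprim : IsPrimitiveRoot ω q := Complex.isPrimitiveRoot_exp q hq0
  have hωq : ω ^ q = 1 := hprim.pow_eq_one
  have hpow : ∀ m : ℤ, (ω ^ m) ^ q = 1 := by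
    intro m
    rw [← zpow_natCast (ω ^ m) q, ← zpow_mul, mul_comm, zpow_mul, zpow_natCast, hωq, one_zpow]
  have key : ∀ a b : Fin q → ℂ, (∀ x, a x ^ q = 1) → (∀ y, b y ^ q = 1) →
      bellValue q q F a b =
        ∑ x : Fin q, ∑ y : Fin q,
          if a x = ω ^ (y.val : ℤ) ∧ b y * ω ^ (x.val : ℤ) = 1
          then (q : ℂ) * q else 0 := by
    intro a b ha hb
    unfold bellValue
    refine Finset.sum_congr rfl fun x _ => Finset.sum_congr rfl fun y _ => ?_
    have hterm : ∀ s t : Fin q,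
        F (idx q q x s) (idx q q y t) * a x ^ s.val * b y ^ t.val
          = (a x * ω ^ (-(y.val : ℤ))) ^ s.val * ((b y * ω ^ ((x.val : ℤ))) ^ t.val) := by
      intro s t
      rw [hF]
      have h1 : (ω ^ (-(y.val : ℤ))) ^ (s.val) = ω ^ (-((s.val : ℤ) * y.val)) := by
        have he : (-(y.val : ℤ)) * s.val = -((s.val : ℤ) * y.val) := by ring
        rw [← zpow_natCast (ω ^ (-(y.val : ℤ))) s.val, ← zpow_mul, he]
      have h2 : (ω ^ ((x.val : ℤ))) ^ (t.val) = ω ^ ((x.val : ℤ) * t.val) := by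
        rw [← zpow_natCast (ω ^ ((x.val : ℤ))) t.val]
        exact (zpow_mul ω _ _).symm
      have h3 : ω ^ ((x.val : ℤ) * t.val - (s.val : ℤ) * y.val)
          = ω ^ ((x.val : ℤ) * t.val) * ω ^ (-((s.val : ℤ) * y.val)) := by
        have he2 : (x.val : ℤ) * t.val - (s.val : ℤ) * y.val
            = (x.val : ℤ) * t.val + -((s.val : ℤ) * y.val) := by ring
        rw [he2, zpow_add₀ hω0]
      rw [mul_pow, mul_pow, h1, h2, h3]; ring
    have hA : (a x * ω ^ (-(y.val : ℤ))) ^ q = 1 := by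
      rw [mul_pow, ha x, one_mul, hpow]
    have hB : (b y * ω ^ ((x.val : ℤ))) ^ q = 1 := by
      rw [mul_pow, hb y, one_mul, hpow]
    calc ∑ s : Fin q, ∑ t : Fin q,
          F (idx q q x s) (idx q q y t) * a x ^ s.val * b y ^ t.val
        = (∑ s : Fin q, (a x * ω ^ (-(y.val : ℤ))) ^ (s : ℕ)) *
          (∑ t : Fin q, (b y * ω ^ ((x.val : ℤ))) ^ (t : ℕ)) := by
          rw [Finset.sum_mul_sum]
          exact Finset.sum_congr rfl fun s _ => Finset.sum_congr rfl fun t _ => hterm s t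
      _ = _ := by
          rw [geom_aux q _ hA, geom_aux q _ hB]
          have hcond : (a x * ω ^ (-(y.val : ℤ)) = 1) ↔ (a x = ω ^ (y.val : ℤ)) := by
            rw [zpow_neg, mul_inv_eq_one₀ (zpow_ne_zero _ hω0)]
          simp only [hcond, zpow_natCast]
          by_cases h1 : a x = ω ^ (y.val : ℕ) <;>
            by_cases h2 : b y * ω ^ (x.val : ℕ) = 1 <;>
            simp [h1, h2]
  constructor
  · rw [key _ _ (fun x => hpow _) (fun y => hpow _)]
    have hxy : ∀ x y : Fin q,
        ((ω ^ ((x.val : ℤ)) = ω ^ (y.val : ℤ)) ∧ ω ^ (-(y.val : ℤ)) * ω ^ ((x.val : ℤ)) = 1)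
          ↔ y = x := by
      intro x y
      constructor
      · rintro ⟨h1, -⟩
        have : x.val = y.val := by
          apply hprim.pow_inj x.isLt y.isLt
          rw [← zpow_natCast ω x.val, ← zpow_natCast ω y.val]; exact h1
        exact Fin.ext this.symm
      · rintro rfl
        refine ⟨rfl, ?_⟩
        rw [zpow_neg, inv_mul_cancel₀ (zpow_ne_zero _ hω0)]
    have : ∀ x : Fin q, (∑ y : Fin q,
        if (ω ^ ((x.val : ℤ)) = ω ^ (y.val : ℤ)) ∧ ω ^ (-(y.val : ℤ)) * ω ^ ((x.val : ℤ)) = 1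
        then (q : ℂ) * q else 0) = (q : ℂ) * q := by
      intro x
      rw [Finset.sum_congr rfl fun y _ => if_congr (hxy x y) rfl rfl]
      simp
    rw [Finset.sum_congr rfl fun x _ => this x]
    simp [Finset.sum_const]
    ring
  · intro a b ha hb
    rw [key a b ha hb]
    have hbound : ∀ x : Fin q, ((∑ y : Fin q,
        if a x = ω ^ (y.val : ℤ) ∧ b y * ω ^ ((x.val : ℤ)) = 1
        then (q : ℂ) * q else 0)).re ≤ (q : ℝ) * q := by
      intro x
      obtain ⟨i, hi, hix⟩ := hprim.eq_pow_of_pow_eq_one (ha x)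
      set y0 : Fin q := ⟨i, hi⟩ with hy0
      have hcond : ∀ y : Fin q,
          (a x = ω ^ (y.val : ℤ) ∧ b y * ω ^ ((x.val : ℤ)) = 1)
            ↔ (y = y0 ∧ b y0 * ω ^ ((x.val : ℤ)) = 1) := by
        intro y
        constructor
        · rintro ⟨h1, h2⟩
          have h3 : ω ^ (y0.val) = ω ^ (y.val) := by
            rw [hix, h1, zpow_natCast]
          have := hprim.pow_inj y0.isLt y.isLt h3
          have hyy : y = y0 := Fin.ext this.symm
          exact ⟨hyy, by rwa [hyy] at h2⟩
        · rintro ⟨rfl, h2⟩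
          exact ⟨by rw [← hix, zpow_natCast], h2⟩
      rw [Finset.sum_congr rfl fun y _ => if_congr (hcond y) rfl rfl]
      by_cases h2 : b y0 * ω ^ ((x.val : ℤ)) = 1
      · simp only [h2, and_true]
        rw [Finset.sum_ite_eq' Finset.univ y0 (fun _ => (q : ℂ) * q)]
        simp
      · simp only [h2, and_false, if_false]
        simp
        positivity
    calc (∑ x : Fin q, ∑ y : Fin q,
          if a x = ω ^ (y.val : ℤ) ∧ b y * ω ^ ((x.val : ℤ)) = 1
          then (q : ℂ) * q else 0).re
        = ∑ x : Fin q, ((∑ y : Fin q,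
          if a x = ω ^ (y.val : ℤ) ∧ b y * ω ^ ((x.val : ℤ)) = 1
          then (q : ℂ) * q else 0)).re := by
          rw [Complex.re_sum]
      _ ≤ ∑ x : Fin q, (q : ℝ) * q := Finset.sum_le_sum fun x _ => hbound x
      _ = (q : ℝ) ^ 3 := by simp [Finset.sum_const]; ring
end
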